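/- Let A be a Noetherian integral domain and let B be a nonzero commutative A-algebra which, as an A-module, is finitely generated and torsion-free. Then for every associated prime 𝔭 of B (as a module over itself): the quotient ring B/𝔭 is torsion-free as an A-module, the structure homomorphism A → B/𝔭 is injective (and integral, since B/𝔭 is module-finite over A), and the Krull dimension of B/𝔭 equals the Krull dimension of A. -/

import Mathlib

/-- Auxiliary: going-up chain lifting for injective integral extensions. -/
lemma stmt0_lift_chain_aux {A C : Type*} [CommRing A] [CommRing C] [Algebra A C]
    [Algebra.IsIntegral A C] (hinj : Function.Injective (algebraMap A C)) :
    ∀ (n : ℕ) (p : LTSeries (PrimeSpectrum A)), p.length = n →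
      ∃ q : LTSeries (PrimeSpectrum C), q.length = p.length ∧
        (q.last).asIdeal.comap (algebraMap A C) = (p.last).asIdeal := by
  intro n
  induction n with
  | zero =>
    intro p hp
    have hbot : ((⊥ : Ideal C).comap (algebraMap A C)) ≤ p.last.asIdeal := by
      rw [← RingHom.ker_eq_comap_bot, (RingHom.injective_iff_ker_eq_bot _).mp hinj]
      exact bot_le
    obtain ⟨Q, -, hQp, hQc⟩ :=
      Ideal.exists_ideal_over_prime_of_isIntegral p.last.asIdeal ⊥ hbot
    exact ⟨RelSeries.singleton _ ⟨Q, hQp⟩, by simp [hp], by simpa using hQc⟩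
  | succ n ih =>
    intro p hp
    have hne : p.length ≠ 0 := by omega
    obtain ⟨q, hq, hqc⟩ := ih p.eraseLast (by simp [hp])
    have hlt : p.eraseLast.last < p.last := p.eraseLast_last_rel_last hne
    have hle : q.last.asIdeal.comap (algebraMap A C) ≤ p.last.asIdeal := by
      rw [hqc]; exact le_of_lt hlt
    obtain ⟨Q, hQge, hQp, hQc⟩ :=
      Ideal.exists_ideal_over_prime_of_isIntegral p.last.asIdeal q.last.asIdeal hle
    have hQlt : q.last < (⟨Q, hQp⟩ : PrimeSpectrum C) := by
      refine lt_of_le_of_ne hQge fun h => ?_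
      rw [h] at hqc
      rw [hQc] at hqc
      exact (ne_of_lt hlt) (PrimeSpectrum.ext hqc.symm)
    refine ⟨q.snoc ⟨Q, hQp⟩ hQlt, by simp [hq, hp], by simpa using hQc⟩

/-- Let `A` be a Noetherian integral domain and `B` a nonzero commutative
`A`-algebra which is finitely generated and torsion-free as an `A`-module.  Then for every
associated prime `𝔭` of `B` (as a module over itself): `B ⧸ 𝔭` is torsion-free as an
`A`-module, the structure map `A → B ⧸ 𝔭` is injective and integral, and the Krull dimension
of `B ⧸ 𝔭` equals the Krull dimension of `A`. -/
theorem stmt_0 (A B : Type*) [CommRing A] [IsDomain A] [IsNoetherianRing A]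
    [CommRing B] [Nontrivial B] [Algebra A B] [Module.Finite A B]
    (htf : ∀ a : A, a ≠ 0 → ∀ x : B, a • x = 0 → x = 0)
    (𝔭 : Ideal B) (h𝔭 : 𝔭 ∈ associatedPrimes B B) :
    (∀ a : A, a ≠ 0 → ∀ x : B ⧸ 𝔭, a • x = 0 → x = 0) ∧
    Function.Injective (algebraMap A (B ⧸ 𝔭)) ∧
    Algebra.IsIntegral A (B ⧸ 𝔭) ∧
    ringKrullDim (B ⧸ 𝔭) = ringKrullDim A := by
  obtain ⟨hprime, b, hb⟩ := h𝔭
  -- torsion-freeness of B ⧸ 𝔭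
  have htf' : ∀ a : A, a ≠ 0 → ∀ x : B ⧸ 𝔭, a • x = 0 → x = 0 := by
    intro a ha x hx
    obtain ⟨y, rfl⟩ := Ideal.Quotient.mk_surjective x
    have hmem : a • y ∈ 𝔭 := by
      rw [← Ideal.Quotient.eq_zero_iff_mem]
      calc Ideal.Quotient.mk 𝔭 (a • y)
          = a • Ideal.Quotient.mk 𝔭 y := map_smul (Ideal.Quotient.mkₐ A 𝔭) a y
        _ = 0 := hx
    rw [hb] at hmem
    simp only [Ideal.mem_radical_iff, Submodule.mem_colon_singleton, Submodule.mem_bot] at hmem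
    obtain ⟨n, hn⟩ := hmem
    rw [smul_pow, smul_assoc] at hn
    have hyb : y ^ n • b = 0 := htf (a ^ n) (pow_ne_zero n ha) _ hn
    have : y ∈ 𝔭 := by
      rw [hb, Ideal.mem_radical_iff]
      exact ⟨n, by rw [Submodule.mem_colon_singleton, Submodule.mem_bot]; exact hyb⟩
    rwa [Ideal.Quotient.eq_zero_iff_mem]
  -- injectivity of the structure map
  have := Ideal.Quotient.nontrivial_iff.mpr hprime.ne_top
  have hinj : Function.Injective (algebraMap A (B ⧸ 𝔭)) := by
    rw [injective_iff_map_eq_zero]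
    intro a ha
    by_contra h
    have h1 : (1 : B ⧸ 𝔭) = 0 := htf' a h 1 (by rwa [← Algebra.algebraMap_eq_smul_one])
    exact one_ne_zero h1
  -- module finiteness, hence integrality
  have hfin : Module.Finite A (B ⧸ 𝔭) :=
    Module.Finite.of_surjective (Ideal.Quotient.mkₐ A 𝔭).toLinearMap
      Ideal.Quotient.mk_surjective
  have hint : Algebra.IsIntegral A (B ⧸ 𝔭) := Algebra.IsIntegral.of_finite A (B ⧸ 𝔭)
  refine ⟨htf', hinj, hint, ?_⟩
  -- Krull dimension equality
  apply le_antisymm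
  · -- dim (B ⧸ 𝔭) ≤ dim A via incomparability
    refine Order.krullDim_le_of_strictMono
      (fun q : PrimeSpectrum (B ⧸ 𝔭) =>
        ⟨q.asIdeal.comap (algebraMap A (B ⧸ 𝔭)), Ideal.IsPrime.comap _⟩) ?_
    intro q₁ q₂ hlt
    have hlt' : q₁.asIdeal < q₂.asIdeal := hlt
    obtain ⟨x, hx₂, hx₁⟩ := SetLike.exists_of_lt hlt'
    exact Ideal.comap_lt_comap_of_integral_mem_sdiff (le_of_lt hlt') ⟨hx₂, hx₁⟩
      (Algebra.IsIntegral.isIntegral x)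
  · -- dim A ≤ dim (B ⧸ 𝔭) via going up
    refine iSup_le fun p => ?_
    obtain ⟨q, hq, -⟩ := stmt0_lift_chain_aux (C := B ⧸ 𝔭) hinj p.length p rfl
    rw [← hq]
    exact Order.LTSeries.length_le_krullDim q
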